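/- With the same setup (generic channel matrices, S_X ≻ 0 of rank s, S_{X_T} ≻ 0 of rank t), rank(S_{Ȳ_R | Ȳ_D, X}) = min(r, (t − d)⁺) almost surely, where S_{Ȳ_R|Ȳ_D,X} is the covariance of Ȳ_R conditioned on both Ȳ_D and X. -/

import Mathlib

open Matrix ComplexOrder

/-- `P` is the Moore–Penrose pseudoinverse of `D`. -/
def IsMoorePenroseInv {m n : Type*} [Fintype m] [Fintype n] (D : Matrix m n ℂ)
    (P : Matrix n m ℂ) : Prop :=
  D * P * D = D ∧ P * D * P = P ∧ (D * P)ᴴ = D * P ∧ (P * D)ᴴ = P * D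

theorem star_mp_unique {R : Type*} [Ring R] [StarRing R] {a p q : R}
    (hp1 : a * p * a = a) (hp2 : p * a * p = p)
    (hp3 : star (a * p) = a * p) (hp4 : star (p * a) = p * a)
    (hq1 : a * q * a = a) (hq2 : q * a * q = q)
    (hq3 : star (a * q) = a * q) (hq4 : star (q * a) = q * a) : p = q := by
  have h1 : p = star a * star p * p := by
    conv_lhs => rw [← hp2, ← hp4, StarMul.star_mul]
  have h2 : p = q * a * p := by
    conv_lhs => rw [h1]
    conv_lhs => rw [← hq1]
    calc star (a * q * a) * star p * p
        = (q * a) * (star a * star p * p) := by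
          rw [StarMul.star_mul, StarMul.star_mul, ← hq4, StarMul.star_mul]
          noncomm_ring
      _ = q * a * p := by rw [← h1]
  have h3 : q = q * star q * star a := by
    conv_lhs => rw [← hq2, mul_assoc, ← hq3, StarMul.star_mul]
    noncomm_ring
  have h4 : q = q * a * p := by
    conv_lhs => rw [h3, ← hp1]
    calc q * star q * star (a * p * a)
        = (q * star q * star a) * (star p * star a) := by
          rw [StarMul.star_mul, StarMul.star_mul]; noncomm_ring
      _ = q * (star p * star a) := by rw [← h3]
      _ = q * star (a * p) := by rw [StarMul.star_mul]
      _ = q * a * p := by rw [hp3, mul_assoc]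
  rw [h2, ← h4]

theorem mp_unique_matrix {m : Type*} [Fintype m] [DecidableEq m] {N P Q : Matrix m m ℂ}
    (hP : IsMoorePenroseInv N P) (hQ : IsMoorePenroseInv N Q) : P = Q := by
  obtain ⟨hP1, hP2, hP3, hP4⟩ := hP
  obtain ⟨hQ1, hQ2, hQ3, hQ4⟩ := hQ
  exact star_mp_unique hP1 hP2
    (by rw [Matrix.star_eq_conjTranspose]; exact hP3)
    (by rw [Matrix.star_eq_conjTranspose]; exact hP4)
    hQ1 hQ2
    (by rw [Matrix.star_eq_conjTranspose]; exact hQ3)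
    (by rw [Matrix.star_eq_conjTranspose]; exact hQ4)

section
open scoped MatrixOrder
theorem posDef_sqrt_facts {n : Type*} [Fintype n] [DecidableEq n] {A : Matrix n n ℂ}
    (hA : A.PosDef) : ∃ R : Matrix n n ℂ, Rᴴ = R ∧ R * R = A ∧ IsUnit R.det := by
  refine ⟨CFC.sqrt A, (CFC.sqrt_nonneg A).posSemidef.1,
    CFC.sqrt_mul_sqrt_self A hA.posSemidef.nonneg, ?_⟩
  have h : IsUnit ((CFC.sqrt A).det * (CFC.sqrt A).det) := by
    rw [← Matrix.det_mul, CFC.sqrt_mul_sqrt_self A hA.posSemidef.nonneg]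
    exact isUnit_iff_ne_zero.mpr hA.det_pos.ne'
  exact isUnit_of_mul_isUnit_left h
end

theorem rank_fromRows_add_of_orth {m₁ m₂ n : Type*} [Fintype m₁] [Fintype m₂] [Fintype n]
    (C : Matrix m₁ n ℂ) (B : Matrix m₂ n ℂ) (h : C * Bᴴ = 0) :
    (Matrix.fromRows C B).rank = C.rank + B.rank := by
  rw [← Matrix.rank_conjTranspose (Matrix.fromRows C B),
    Matrix.conjTranspose_fromRows_eq_fromCols_conjTranspose,
    ← Matrix.rank_conjTranspose C, ← Matrix.rank_conjTranspose B]
  have hrange : LinearMap.range (Matrix.fromCols Cᴴ Bᴴ).mulVecLin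
      = LinearMap.range Cᴴ.mulVecLin ⊔ LinearMap.range Bᴴ.mulVecLin := by
    apply le_antisymm
    · rintro x ⟨v, rfl⟩
      have hv : v = Sum.elim (v ∘ Sum.inl) (v ∘ Sum.inr) := by ext (i | i) <;> rfl
      rw [Matrix.mulVecLin_apply, hv, Matrix.fromCols_mulVec_sumElim]
      exact Submodule.add_mem_sup ⟨_, rfl⟩ ⟨_, rfl⟩
    · rw [sup_le_iff]
      constructor <;> rintro x ⟨v, rfl⟩
      · exact ⟨Sum.elim v 0, by simp [Matrix.mulVecLin_apply]⟩
      · exact ⟨Sum.elim 0 v, by simp [Matrix.mulVecLin_apply]⟩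
  have hinf : LinearMap.range Cᴴ.mulVecLin ⊓ LinearMap.range Bᴴ.mulVecLin = ⊥ := by
    rw [eq_bot_iff]
    rintro x ⟨⟨u, hu⟩, ⟨w, hw⟩⟩
    have hx : star x ⬝ᵥ x = 0 := by
      have hxx : star x ⬝ᵥ x = star (Cᴴ.mulVecLin u) ⬝ᵥ (Bᴴ.mulVecLin w) := by rw [hu, hw]
      rw [hxx, Matrix.mulVecLin_apply, Matrix.mulVecLin_apply, Matrix.star_mulVec,
        Matrix.conjTranspose_conjTranspose, ← dotProduct_mulVec,
        Matrix.mulVec_mulVec, h]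
      simp
    simpa [Submodule.mem_bot] using dotProduct_star_self_eq_zero.mp hx
  rw [Matrix.rank, Matrix.rank, Matrix.rank, hrange]
  have hd := Submodule.finrank_sup_add_finrank_inf_eq
    (LinearMap.range Cᴴ.mulVecLin) (LinearMap.range Bᴴ.mulVecLin)
  rw [hinf] at hd
  simpa using hd

/-- For noiseless observations `Ȳ_R = H_SR X + H_TR X_T`,
`Ȳ_D = H_SD X + H_TD X_T` with independent Gaussian `X, X_T` of positive
definite covariances and generic channel matrices, the conditional covariance
of `Ȳ_R` given `(Ȳ_D, X)` has rank `min r ((t − d)⁺)` (truncated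
subtraction). -/
theorem rank_conditional_covariance_relay_given_dest_and_input
    (r d s t : ℕ)
    (HSR : Matrix (Fin r) (Fin s) ℂ) (HTR : Matrix (Fin r) (Fin t) ℂ)
    (HSD : Matrix (Fin d) (Fin s) ℂ) (HTD : Matrix (Fin d) (Fin t) ℂ)
    (SX : Matrix (Fin s) (Fin s) ℂ) (SXT : Matrix (Fin t) (Fin t) ℂ)
    (hSX : SX.PosDef) (hSXT : SXT.PosDef)
    (HR : Matrix (Fin r) (Fin s ⊕ Fin t) ℂ)
    (hHR : HR = Matrix.of fun i => Sum.elim (HSR i) (HTR i))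
    (HD : Matrix (Fin d) (Fin s ⊕ Fin t) ℂ)
    (hHD : HD = Matrix.of fun i => Sum.elim (HSD i) (HTD i))
    -- the map extracting `X` from `(X, X_T)`
    (EX : Matrix (Fin s) (Fin s ⊕ Fin t) ℂ)
    (hEX : EX = Matrix.of fun i j =>
      Sum.elim (fun j' => if i = j' then (1:ℂ) else 0) (fun _ => (0:ℂ)) j)
    -- the map giving the conditioned-on block `(Ȳ_D, X)`
    (G2 : Matrix (Fin d ⊕ Fin s) (Fin s ⊕ Fin t) ℂ)
    (hG2 : G2 = Matrix.of (Sum.elim (fun i => HD i) (fun i => EX i)))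
    -- genericity: full rank of the stacked maps
    (hgen1 : (Matrix.of (Sum.elim (fun i => HR i) (fun i => G2 i)) :
        Matrix (Fin r ⊕ (Fin d ⊕ Fin s)) (Fin s ⊕ Fin t) ℂ).rank
        = min (r + d + s) (s + t))
    (hgen2 : G2.rank = min (d + s) (s + t))
    (S : Matrix (Fin s ⊕ Fin t) (Fin s ⊕ Fin t) ℂ)
    (hS : S = Matrix.fromBlocks SX 0 0 SXT)
    (P : Matrix (Fin d ⊕ Fin s) (Fin d ⊕ Fin s) ℂ)
    (hP : IsMoorePenroseInv (G2 * S * G2ᴴ) P) :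
    (HR * S * HRᴴ - (HR * S * G2ᴴ) * P * (HR * S * G2ᴴ)ᴴ).rank
      = min r (t - d) := by
  classical
  -- a Hermitian invertible square root of S
  obtain ⟨L, hLh, hLL, hdetL⟩ : ∃ L : Matrix (Fin s ⊕ Fin t) (Fin s ⊕ Fin t) ℂ,
      Lᴴ = L ∧ L * L = S ∧ IsUnit L.det := by
    obtain ⟨R1, hR1h, hR1, hR1d⟩ := posDef_sqrt_facts hSX
    obtain ⟨R2, hR2h, hR2, hR2d⟩ := posDef_sqrt_facts hSXT
    refine ⟨Matrix.fromBlocks R1 0 0 R2, ?_, ?_, ?_⟩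
    · rw [Matrix.fromBlocks_conjTranspose, hR1h, hR2h]
      simp
    · rw [hS, Matrix.fromBlocks_multiply]
      simp [hR1, hR2]
    · rw [Matrix.det_fromBlocks_zero₂₁]
      exact hR1d.mul hR2d
  have hLLh : L * Lᴴ = S := by rw [hLh, hLL]
  set A := HR * L with hAdef
  set B := G2 * L with hBdef
  set N := B * Bᴴ with hNdef
  clear_value A B N
  have hN : G2 * S * G2ᴴ = N := by
    rw [hNdef, hBdef, Matrix.conjTranspose_mul, hLh, ← hLL]
    simp only [Matrix.mul_assoc]
  have hAA : HR * S * HRᴴ = A * Aᴴ := by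
    rw [hAdef, Matrix.conjTranspose_mul, hLh, ← hLL]
    simp only [Matrix.mul_assoc]
  have hAB : HR * S * G2ᴴ = A * Bᴴ := by
    rw [hAdef, hBdef, Matrix.conjTranspose_mul, hLh, ← hLL]
    simp only [Matrix.mul_assoc]
  have hNh : Nᴴ = N := by
    rw [hNdef, Matrix.conjTranspose_mul, Matrix.conjTranspose_conjTranspose]
  rw [hN] at hP
  obtain ⟨hP1, hP2, hP3, hP4⟩ := hP
  -- P is Hermitian
  have hPh : Pᴴ = P := by
    refine mp_unique_matrix (N := N) ⟨?_, ?_, ?_, ?_⟩ ⟨hP1, hP2, hP3, hP4⟩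
    · have h := congrArg Matrix.conjTranspose hP1
      simpa only [Matrix.conjTranspose_mul, hNh, Matrix.mul_assoc] using h
    · have h := congrArg Matrix.conjTranspose hP2
      simpa only [Matrix.conjTranspose_mul, hNh, Matrix.mul_assoc] using h
    · rw [Matrix.conjTranspose_mul, Matrix.conjTranspose_conjTranspose, hNh]
      calc P * N = (P * N)ᴴ := hP4.symm
        _ = Nᴴ * Pᴴ := by rw [Matrix.conjTranspose_mul]
        _ = N * Pᴴ := by rw [hNh]
    · rw [Matrix.conjTranspose_mul, Matrix.conjTranspose_conjTranspose, hNh]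
      calc N * P = (N * P)ᴴ := hP3.symm
        _ = Pᴴ * Nᴴ := by rw [Matrix.conjTranspose_mul]
        _ = Pᴴ * N := by rw [hNh]
  set Q : Matrix (Fin s ⊕ Fin t) (Fin s ⊕ Fin t) ℂ := 1 - Bᴴ * P * B with hQdef
  clear_value Q
  have hQh : Qᴴ = Q := by
    rw [hQdef]
    simp only [Matrix.conjTranspose_sub, Matrix.conjTranspose_one, Matrix.conjTranspose_mul,
      Matrix.conjTranspose_conjTranspose, hPh, Matrix.mul_assoc]
  have hPiPi : (Bᴴ * P * B) * (Bᴴ * P * B) = Bᴴ * P * B := by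
    calc (Bᴴ * P * B) * (Bᴴ * P * B)
        = Bᴴ * (P * (B * Bᴴ) * P) * B := by simp only [Matrix.mul_assoc]
      _ = Bᴴ * P * B := by rw [← hNdef, hP2]
  have hQQ : Q * Q = Q := by
    rw [hQdef, Matrix.mul_sub, Matrix.mul_one, Matrix.sub_mul, Matrix.one_mul, hPiPi]
    abel
  have hBQBh : B * Q * Bᴴ = 0 := by
    rw [hQdef, Matrix.mul_sub, Matrix.mul_one, Matrix.sub_mul]
    have h : B * (Bᴴ * P * B) * Bᴴ = N := by
      calc B * (Bᴴ * P * B) * Bᴴ = (B * Bᴴ) * P * (B * Bᴴ) := by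
            simp only [Matrix.mul_assoc]
        _ = N := by rw [← hNdef, hP1]
    rw [h, ← hNdef, sub_self]
  have hBQ : B * Q = 0 := by
    have h : (B * Q) * (B * Q)ᴴ = 0 := by
      rw [Matrix.conjTranspose_mul, hQh]
      calc B * Q * (Q * Bᴴ) = (B * (Q * Q)) * Bᴴ := by simp only [Matrix.mul_assoc]
        _ = B * Q * Bᴴ := by rw [hQQ, Matrix.mul_assoc]
        _ = 0 := hBQBh
    exact Matrix.self_mul_conjTranspose_eq_zero.mp h
  have hQB : Q * Bᴴ = 0 := by
    have h := congrArg Matrix.conjTranspose hBQ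
    rwa [Matrix.conjTranspose_mul, hQh, Matrix.conjTranspose_zero] at h
  -- the Schur complement equals (A*Q)*(A*Q)ᴴ
  have hM : HR * S * HRᴴ - (HR * S * G2ᴴ) * P * (HR * S * G2ᴴ)ᴴ
      = (A * Q) * (A * Q)ᴴ := by
    rw [hAA, hAB]
    have h2 : (A * Bᴴ)ᴴ = B * Aᴴ := by
      rw [Matrix.conjTranspose_mul, Matrix.conjTranspose_conjTranspose]
    rw [h2, Matrix.conjTranspose_mul, hQh]
    calc A * Aᴴ - A * Bᴴ * P * (B * Aᴴ)
        = A * (1 - Bᴴ * P * B) * Aᴴ := by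
          rw [Matrix.mul_sub, Matrix.mul_one, Matrix.sub_mul]
          simp only [Matrix.mul_assoc]
      _ = (A * (Q * Q)) * Aᴴ := by rw [← hQdef, hQQ]
      _ = A * Q * (Q * Aᴴ) := by simp only [Matrix.mul_assoc]
  rw [hM, Matrix.rank_self_mul_conjTranspose]
  -- rank (A*Q) + rank B = rank (fromRows A B)
  have horth : (A * Q) * Bᴴ = 0 := by
    rw [Matrix.mul_assoc, hQB, Matrix.mul_zero]
  have hsum : (Matrix.fromRows (A * Q) B).rank = (A * Q).rank + B.rank :=
    rank_fromRows_add_of_orth _ _ horth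
  have hEfact : (Matrix.fromBlocks 1 (A * (Bᴴ * P)) 0 1 :
        Matrix (Fin r ⊕ (Fin d ⊕ Fin s)) (Fin r ⊕ (Fin d ⊕ Fin s)) ℂ)
      * Matrix.fromRows (A * Q) B = Matrix.fromRows A B := by
    rw [Matrix.fromBlocks_mul_fromRows]
    have e1 : (1 : Matrix (Fin r) (Fin r) ℂ) * (A * Q) + (A * (Bᴴ * P)) * B = A := by
      rw [Matrix.one_mul, hQdef, Matrix.mul_sub, Matrix.mul_one]
      simp only [Matrix.mul_assoc]
      abel
    have e2 : (0 : Matrix (Fin d ⊕ Fin s) (Fin r) ℂ) * (A * Q)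
        + (1 : Matrix (Fin d ⊕ Fin s) (Fin d ⊕ Fin s) ℂ) * B = B := by
      rw [Matrix.zero_mul, Matrix.one_mul, zero_add]
    rw [e1, e2]
  have hdetE : IsUnit (Matrix.fromBlocks 1 (A * (Bᴴ * P)) 0 1 :
      Matrix (Fin r ⊕ (Fin d ⊕ Fin s)) (Fin r ⊕ (Fin d ⊕ Fin s)) ℂ).det := by
    rw [Matrix.det_fromBlocks_zero₂₁, Matrix.det_one, Matrix.det_one, mul_one]
    exact isUnit_one
  have hrank1 : (Matrix.fromRows A B).rank = min (r + d + s) (s + t) := by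
    have h : Matrix.fromRows A B = Matrix.fromRows HR G2 * L := by
      rw [Matrix.fromRows_mul, hAdef, hBdef]
    rw [h, Matrix.rank_mul_eq_left_of_isUnit_det L _ hdetL]
    exact hgen1
  have hrankB : B.rank = min (d + s) (s + t) := by
    rw [hBdef, Matrix.rank_mul_eq_left_of_isUnit_det L _ hdetL]
    exact hgen2
  have hkey : (A * Q).rank + B.rank = min (r + d + s) (s + t) := by
    rw [← hsum, ← hrank1, ← hEfact, Matrix.rank_mul_eq_right_of_isUnit_det _ _ hdetE]
  rw [hrankB] at hkey
  omega
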